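/- arXiv:1207.6292 — 2 statements merged into one kernel-verified Lean document; each statement's English description precedes it below -/
import Mathlib

section
/- Let $P(x)$ be an even matrix polynomial, $B(z)$ and $C(z)$ the unique matrix polynomials such that $P(x) = B(x^2) + x\,C(x^2)$, where $B$ collects the symmetric (even-power) coefficients and $C$ the skew-symmetric (odd-power) coefficients. Define $M(z) = \begin{pmatrix} B(z) & z C(z) \\ C(z) & B(z) \end{pmatrix}$. Then $\det M(x^2) = \det P(x) \cdot \det P(-x)$ for all $x \in \mathbb{C}$. -/
open Matrix

/-- For an even matrix polynomial `P(x) = B(x²) + x C(x²)`, the doubled-size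
polynomial `M(z) = [[B(z), z C(z)], [C(z), B(z)]]` satisfies
`det M(x²) = det P(x) · det P(-x)`. -/
theorem even_polynomial_block_determinant
    (n : ℕ) (P B C : ℂ → Matrix (Fin n) (Fin n) ℂ)
    (hsplit : ∀ x : ℂ, P x = B (x ^ 2) + x • C (x ^ 2))
    (heven : ∀ x : ℂ, (P x)ᵀ = P (-x)) :
    ∀ x : ℂ,
      (Matrix.fromBlocks (B (x ^ 2)) ((x ^ 2) • C (x ^ 2)) (C (x ^ 2)) (B (x ^ 2))).det
        = (P x).det * (P (-x)).det := by
  intro x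
  set Bm := B (x ^ 2) with hBm
  set Cm := C (x ^ 2) with hCm
  have hP : P x = Bm + x • Cm := hsplit x
  have hP' : P (-x) = Bm - x • Cm := by
    have h := hsplit (-x)
    rw [neg_sq] at h
    rw [h, ← hBm, ← hCm, neg_smul, sub_eq_add_neg]
  set M := Matrix.fromBlocks Bm ((x ^ 2) • Cm) Cm Bm with hM
  set U := Matrix.fromBlocks (1 : Matrix (Fin n) (Fin n) ℂ) (x • (1 : Matrix (Fin n) (Fin n) ℂ)) (0 : Matrix (Fin n) (Fin n) ℂ) (1 : Matrix (Fin n) (Fin n) ℂ) with hU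
  set V := Matrix.fromBlocks (1 : Matrix (Fin n) (Fin n) ℂ) (-(x • (1 : Matrix (Fin n) (Fin n) ℂ))) (0 : Matrix (Fin n) (Fin n) ℂ) (1 : Matrix (Fin n) (Fin n) ℂ) with hV
  have key : U * M * V = Matrix.fromBlocks (Bm + x • Cm) 0 Cm (Bm - x • Cm) := by
    rw [hU, hM, hV, Matrix.fromBlocks_multiply, Matrix.fromBlocks_multiply]
    congr 1 <;> simp [Matrix.smul_mul, Matrix.mul_smul, smul_smul, pow_two,
      mul_comm, smul_sub, sub_eq_add_neg]
    abel
    abel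
  have hdU : U.det = 1 := by
    rw [hU, Matrix.det_fromBlocks_zero₂₁]; simp
  have hdV : V.det = 1 := by
    rw [hV, Matrix.det_fromBlocks_zero₂₁]; simp
  have : (U * M * V).det = M.det := by
    rw [Matrix.det_mul, Matrix.det_mul, hdU, hdV, one_mul, mul_one]
  rw [← this, key, Matrix.det_fromBlocks_zero₁₂, hP, hP']
end

section
/- Let $p(x)$ be a scalar polynomial of degree $N$ with roots $\xi_1, \ldots, \xi_N$ (with multiplicity) and leading coefficient $p_N$, and let $x_1, \ldots, x_N$ be pairwise distinct complex numbers. Then every root of $p$ lies in the union of the disks $D_i$ of center $x_i$ and radius $r_i = N\, |p(x_i)| / (|p_N| \prod_{j \neq i} |x_i - x_j|)$, $i = 1, \ldots, N$. -/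
open Polynomial Finset

lemma coeff_eq_sum_nodalWeight {F : Type*} [Field F] {ι : Type*} [DecidableEq ι]
    {s : Finset ι} {v : ι → F} (hvs : Set.InjOn v s) {f : F[X]}
    (hdeg : f.degree < #s) :
    f.coeff (#s - 1) = ∑ i ∈ s, f.eval (v i) * Lagrange.nodalWeight s v i := by
  conv_lhs => rw [Lagrange.eq_interpolate hvs hdeg, Lagrange.interpolate_apply]
  rw [Polynomial.finset_sum_coeff]
  refine Finset.sum_congr rfl fun i hi => ?_
  rw [Lagrange.basis_eq_prod_sub_inv_mul_nodal_div hi,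
    ← Lagrange.nodal_erase_eq_nodal_div hi, Polynomial.coeff_C_mul,
    Polynomial.coeff_C_mul]
  have h1 : (Lagrange.nodal (s.erase i) v).natDegree = #s - 1 := by
    rw [Lagrange.natDegree_nodal, Finset.card_erase_of_mem hi]
  rw [← h1, (Lagrange.nodal_monic).coeff_natDegree]
  ring

/-- Inclusion disks: every root of `p = p_N ∏ (X - ξ i)` lies in the union of
the disks centered at `x i` with radii
`r i = N |p(x i)| / (|p_N| ∏_{j ≠ i} |x i - x j|)`. -/
theorem inclusion_disks
    (N : ℕ) (pN : ℂ) (hpN : pN ≠ 0) (ξ x : Fin N → ℂ)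
    (hx : Function.Injective x) (p : Polynomial ℂ)
    (hp : p = Polynomial.C pN * ∏ i, (X - Polynomial.C (ξ i)))
    (z : ℂ) (hz : p.eval z = 0) :
    ∃ i, ‖z - x i‖ ≤
      N * ‖p.eval (x i)‖ /
        (‖pN‖ * ∏ j ∈ Finset.univ.erase i, ‖x i - x j‖) := by
  by_contra hcon
  push_neg at hcon
  have hN : N ≠ 0 := by
    rintro rfl
    rw [hp] at hz
    simp at hz
    exact hpN hz
  have hNpos : (0:ℝ) < N := by exact_mod_cast Nat.pos_of_ne_zero hN
  have : Nonempty (Fin N) := ⟨⟨0, Nat.pos_of_ne_zero hN⟩⟩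
  -- z is a root ξ k
  have hprod : ∏ i, (z - ξ i) = 0 := by
    rw [hp] at hz
    simpa [hpN, eval_prod] using hz
  obtain ⟨k, -, hk⟩ := Finset.prod_eq_zero_iff.mp hprod
  have hzk : z = ξ k := sub_eq_zero.mp hk
  -- the polynomial q = ∏_{ℓ ≠ k} (X - ξ ℓ)
  set q : ℂ[X] := Lagrange.nodal (Finset.univ.erase k) ξ with hq
  have hvs : Set.InjOn x (Finset.univ : Finset (Fin N)) := fun a _ b _ h => hx h
  have hcard : #(Finset.univ : Finset (Fin N)) = N := by simp
  have hdeg : q.degree < #(Finset.univ : Finset (Fin N)) := by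
    rw [hq, Lagrange.degree_nodal, card_erase_of_mem (mem_univ k), hcard]
    exact_mod_cast Nat.sub_lt (Nat.pos_of_ne_zero hN) one_pos
  have key := coeff_eq_sum_nodalWeight hvs hdeg
  have hq1 : q.coeff (#(Finset.univ : Finset (Fin N)) - 1) = 1 := by
    have h1 : q.natDegree = #(Finset.univ : Finset (Fin N)) - 1 := by
      rw [hq, Lagrange.natDegree_nodal, card_erase_of_mem (mem_univ k)]
    rw [← h1, Lagrange.nodal_monic.coeff_natDegree]
  rw [hq1] at key
  -- abbreviations
  set A : Fin N → ℝ := fun i => ∏ j ∈ Finset.univ.erase i, Norm.norm (x i - x j)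
    with hA
  have hApos : ∀ i, 0 < A i := by
    intro i
    refine Finset.prod_pos fun j hj => ?_
    rw [norm_pos_iff, sub_ne_zero]
    exact fun h => (Finset.mem_erase.mp hj).1 (hx h.symm)
  have hpNpos : 0 < Norm.norm pN := norm_pos_iff.mpr hpN
  -- relation between p and q at x i
  have hpeval : ∀ i, Norm.norm (p.eval (x i)) =
      Norm.norm pN * (Norm.norm (x i - z) * Norm.norm (q.eval (x i))) := by
    intro i
    rw [hp]
    simp only [eval_mul, eval_C, eval_prod, eval_sub, eval_X, norm_mul]
    congr 1
    rw [← Finset.mul_prod_erase _ _ (mem_univ k), norm_mul, hzk, hq,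
      Lagrange.eval_nodal]
  -- each term of the sum is < 1/N
  have hterm : ∀ i, Norm.norm (q.eval (x i)) * (A i)⁻¹ < 1 / N := by
    intro i
    have hci : 0 < Norm.norm (z - x i) := by
      refine lt_of_le_of_lt ?_ (hcon i)
      exact div_nonneg (by positivity) (le_of_lt (mul_pos hpNpos (hApos i)))
    have h2 := hcon i
    rw [div_lt_iff₀ (mul_pos hpNpos (hApos i)), hpeval i] at h2
    have hxz : Norm.norm (x i - z) = Norm.norm (z - x i) :=
      norm_sub_rev _ _
    rw [hxz] at h2
    rw [← div_eq_mul_inv, div_lt_div_iff₀ (hApos i) hNpos]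
    refine lt_of_mul_lt_mul_left (a := Norm.norm pN * Norm.norm (z - x i)) ?_ (by positivity)
    calc Norm.norm pN * Norm.norm (z - x i) * (Norm.norm (eval (x i) q) * ↑N)
        = ↑N * (Norm.norm pN * (Norm.norm (z - x i) * Norm.norm (eval (x i) q))) := by ring
      _ < Norm.norm (z - x i) * (Norm.norm pN * A i) := h2
      _ = Norm.norm pN * Norm.norm (z - x i) * (1 * A i) := by ring
  -- the sum is ≥ 1
  have habs : (1:ℝ) ≤ ∑ i, Norm.norm (q.eval (x i)) * (A i)⁻¹ := by
    calc (1:ℝ) = Norm.norm (∑ i, q.eval (x i) * Lagrange.nodalWeight Finset.univ x i) := by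
          rw [← key]; simp
      _ ≤ ∑ i, Norm.norm (q.eval (x i) * Lagrange.nodalWeight Finset.univ x i) :=
          norm_sum_le _ _
      _ = ∑ i, Norm.norm (q.eval (x i)) * (A i)⁻¹ := by
          refine Finset.sum_congr rfl fun i _ => ?_
          rw [norm_mul, Lagrange.nodalWeight, norm_prod]
          simp only [norm_inv]
          rw [← Finset.prod_inv_distrib]
  have hsum : ∑ i, Norm.norm (q.eval (x i)) * (A i)⁻¹ < 1 := by
    calc ∑ i, Norm.norm (q.eval (x i)) * (A i)⁻¹
        < ∑ _i : Fin N, 1 / (N:ℝ) :=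
          Finset.sum_lt_sum_of_nonempty Finset.univ_nonempty fun i _ => hterm i
      _ = 1 := by
          rw [Finset.sum_const, card_univ, Fintype.card_fin, nsmul_eq_mul]
          field_simp
  linarith
end
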